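/- Under the conditional independence assumption Z ⟂ R | (Y, A), the missing-data outcome distribution is recovered from the complete-case distribution via the odds ratio: f(y | R=0, a, z) = OR(a,y) · f(y | R=1, a, z) / E[OR(a,Y) | R=1, A=a, Z=z], where E[OR(a,Y) | R=1, A=a, Z=z] = Σ_y OR(a,y) · f(y | R=1, a, z). -/

import Mathlib

open Finset

variable {A Y Z : Type} [Fintype A] [Fintype Y] [Fintype Z]

/-- Marginal mass `f(a, y)` of the joint mass function `f` on `(A, Y, Z, R)`,
with `R` encoded by `Bool` (`true` meaning `R = 1`). -/
noncomputable def mAY (f : A → Y → Z → Bool → ℝ) (a : A) (y : Y) : ℝ :=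
  ∑ z, ∑ r, f a y z r

/-- Marginal mass `f(a, y, z)`. -/
noncomputable def mAYZ (f : A → Y → Z → Bool → ℝ) (a : A) (y : Y) (z : Z) : ℝ :=
  ∑ r, f a y z r

/-- Marginal mass `f(a, y, r)`. -/
noncomputable def mAYR (f : A → Y → Z → Bool → ℝ) (a : A) (y : Y) (r : Bool) : ℝ :=
  ∑ z, f a y z r

/-- Marginal mass `f(a)`. -/
noncomputable def mA (f : A → Y → Z → Bool → ℝ) (a : A) : ℝ :=
  ∑ y, ∑ z, ∑ r, f a y z r

/-- Marginal mass `f(a, r)`. -/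
noncomputable def mAR (f : A → Y → Z → Bool → ℝ) (a : A) (r : Bool) : ℝ :=
  ∑ y, ∑ z, f a y z r

/-- Marginal mass `f(a, z)`. -/
noncomputable def mAZ (f : A → Y → Z → Bool → ℝ) (a : A) (z : Z) : ℝ :=
  ∑ y, ∑ r, f a y z r

/-- Marginal mass `f(a, z, r)`. -/
noncomputable def mAZR (f : A → Y → Z → Bool → ℝ) (a : A) (z : Z) (r : Bool) : ℝ :=
  ∑ y, f a y z r

/-- The shadow-variable assumption (a): the conditional independence `Z ⟂ R | (Y, A)`,
expressed via joint masses as `f(a,y,z,r) · f(a,y) = f(a,y,z) · f(a,y,r)`,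
i.e. `f(z, r | y, a) = f(z | y, a) · f(r | y, a)`. -/
def CondIndepZR (f : A → Y → Z → Bool → ℝ) : Prop :=
  ∀ (a : A) (y : Y) (z : Z) (r : Bool),
    f a y z r * mAY f a y = mAYZ f a y z * mAYR f a y r

/-- The odds-ratio function
`OR(a,y) = [f(R=0 | a, y) · f(R=1 | a, y₁)] / [f(R=1 | a, y) · f(R=0 | a, y₁)]`,
with reference value `y₁`. -/
noncomputable def OddsRatio (f : A → Y → Z → Bool → ℝ) (y₁ : Y) (a : A) (y : Y) : ℝ :=
  ((mAYR f a y false / mAY f a y) * (mAYR f a y₁ true / mAY f a y₁)) /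
    ((mAYR f a y true / mAY f a y) * (mAYR f a y₁ false / mAY f a y₁))

/-- The conditional expectation of the odds ratio among complete cases given `A = a, Z = z`:
`E[OR(a,Y) | R=1, A=a, Z=z] = Σ_y OR(a,y) · f(y | R=1, a, z)`. -/
noncomputable def expORz (f : A → Y → Z → Bool → ℝ) (y₁ : Y) (a : A) (z : Z) : ℝ :=
  ∑ y, OddsRatio f y₁ a y * (f a y z true / mAZR f a z true)

/-- equation (3.8): under the shadow-variable conditional independence
`Z ⟂ R | (Y, A)`, the missing-data outcome distribution is recovered from the
complete-case distribution via the odds ratio: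
`f(y | R=0, a, z) = OR(a,y) · f(y | R=1, a, z) / E[OR(a,Y) | R=1, A=a, Z=z]`. -/
theorem missing_data_law_of_condIndep
    (f : A → Y → Z → Bool → ℝ)
    (hpos : ∀ (a : A) (y : Y) (z : Z) (r : Bool), 0 < f a y z r)
    (hsum : ∑ a, ∑ y, ∑ z, ∑ r, f a y z r = 1)
    (hci : CondIndepZR f) (y₁ : Y) :
    ∀ (a : A) (y : Y) (z : Z),
      f a y z false / mAZR f a z false =
        OddsRatio f y₁ a y * (f a y z true / mAZR f a z true) / expORz f y₁ a z := by

  intro a y z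
  have hmAY : ∀ y' : Y, 0 < mAY f a y' := fun y' =>
    Finset.sum_pos (fun z' _ => Finset.sum_pos (fun r _ => hpos a y' z' r)
      Finset.univ_nonempty) ⟨z, Finset.mem_univ z⟩
  have hmAYR : ∀ (y' : Y) (r : Bool), 0 < mAYR f a y' r := fun y' r =>
    Finset.sum_pos (fun z' _ => hpos a y' z' r) ⟨z, Finset.mem_univ z⟩
  have hmAZR : ∀ r : Bool, 0 < mAZR f a z r := fun r =>
    Finset.sum_pos (fun y' _ => hpos a y' z r) ⟨y₁, Finset.mem_univ y₁⟩
  have hkey : ∀ y' : Y, f a y' z false * mAYR f a y' true =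
      f a y' z true * mAYR f a y' false := by
    intro y'
    have h1 := hci a y' z false
    have h2 := hci a y' z true
    have hm := (hmAY y').ne'
    apply mul_right_cancel₀ hm
    calc f a y' z false * mAYR f a y' true * mAY f a y'
        = (f a y' z false * mAY f a y') * mAYR f a y' true := by ring
      _ = (mAYZ f a y' z * mAYR f a y' false) * mAYR f a y' true := by rw [h1]
      _ = (mAYZ f a y' z * mAYR f a y' true) * mAYR f a y' false := by ring
      _ = (f a y' z true * mAY f a y') * mAYR f a y' false := by rw [h2]
      _ = f a y' z true * mAYR f a y' false * mAY f a y' := by ring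
  set c : ℝ := mAYR f a y₁ true / mAYR f a y₁ false with hc
  have hcpos : 0 < c := div_pos (hmAYR y₁ true) (hmAYR y₁ false)
  have hOR : ∀ y' : Y, OddsRatio f y₁ a y' * f a y' z true = c * f a y' z false := by
    intro y'
    have hM := (hmAY y').ne'
    have hM1 := (hmAY y₁).ne'
    have hR1 := (hmAYR y' true).ne'
    have hR0 := (hmAYR y' false).ne'
    have hR1' := (hmAYR y₁ true).ne'
    have hR0' := (hmAYR y₁ false).ne'
    rw [OddsRatio, hc]
    field_simp
    linear_combination (-1) * hkey y'
  have hexp : expORz f y₁ a z = c * mAZR f a z false / mAZR f a z true := by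
    rw [expORz]
    have hterm : ∀ y' : Y, OddsRatio f y₁ a y' * (f a y' z true / mAZR f a z true) =
        c * f a y' z false / mAZR f a z true := by
      intro y'
      rw [← mul_div_assoc, hOR y']
    rw [Finset.sum_congr rfl fun y' _ => hterm y']
    rw [← Finset.sum_div, ← Finset.mul_sum]
    simp only [mAZR]
  rw [hexp, ← mul_div_assoc, hOR y]
  have h0 := (hmAZR false).ne'
  have h1 := (hmAZR true).ne'
  field_simp
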